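/- Let α > 0, C₁ > 0, and C ∈ ℝ be real constants, let D ⊆ {(x,t) ∈ ℝ² : t > 0} be open, and let θ : D → ℝ be a function such that θ and the function w defined below have all partial derivatives appearing in the conclusion, with mixed partial derivatives commuting. Suppose θ satisfies the implicit relation θ(x,t) = α t (C₁ E(x,t) − 1)/(C₁ E(x,t) + 1) on D, where E(x,t) = exp(α(x + C θ(x,t))). Define A(x,t) = (C₁ E(x,t) + 1)² / (2α² t C₁ E(x,t)) and assume A(x,t) − C ≠ 0 on D, and set w(x,t) = 1/(A(x,t) − C) (equivalently, (C w + 1)/w = A). Assume further that w(x,t) ≠ 0 and C w(x,t) + 1 ≠ 0 on D. Then w satisfies ∂w/∂t + ∂/∂x ( (∂w/∂x) / (w (C w + 1)) ) = 0 on D. -/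

import Mathlib

private lemma auxU' (α C₁ C d x : ℝ) (g : ℝ → ℝ) (hg : HasDerivAt g d x) :
    HasDerivAt (fun s => C₁ * Real.exp (α * (s + C * g s)))
      ((C₁ * Real.exp (α * (x + C * g x))) * (α * (1 + C * d))) x := by
  have h := ((((hasDerivAt_id x).add (hg.const_mul C)).const_mul α).exp).const_mul C₁
  refine h.congr_deriv ?_
  simp only [Pi.add_apply, id_eq]
  ring

private lemma auxV' (α C₁ C c d t : ℝ) (g : ℝ → ℝ) (hg : HasDerivAt g d t) :
    HasDerivAt (fun τ => C₁ * Real.exp (α * (c + C * g τ)))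
      ((C₁ * Real.exp (α * (c + C * g t))) * (α * (C * d))) t := by
  have h := ((((hasDerivAt_const t c).add (hg.const_mul C)).const_mul α).exp).const_mul C₁
  refine h.congr_deriv ?_
  simp only [Pi.add_apply]
  ring

private lemma stepA' (α C₁ C t d x : ℝ) (hC₁ : 0 < C₁) (g : ℝ → ℝ)
    (hg : HasDerivAt g d x)
    (heq : g =ᶠ[nhds x] fun s =>
      α * t * (C₁ * Real.exp (α * (s + C * g s)) - 1) /
        (C₁ * Real.exp (α * (s + C * g s)) + 1)) :
    d * (C₁ * Real.exp (α * (x + C * g x)) + 1) ^ 2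
      = 2 * α ^ 2 * t * (C₁ * Real.exp (α * (x + C * g x))) * (1 + C * d) := by
  have hu := auxU' α C₁ C d x g hg
  have hnum := (hu.sub_const 1).const_mul (α * t)
  have hden := hu.add_const 1
  have hden0 : C₁ * Real.exp (α * (x + C * g x)) + 1 ≠ 0 := by positivity
  have hdiv := hnum.div hden hden0
  have h2 := hg.unique (hdiv.congr_of_eventuallyEq heq)
  rw [eq_div_iff (by positivity)] at h2
  linear_combination h2

private lemma stepB' (α C₁ C c d t : ℝ) (hC₁ : 0 < C₁) (g : ℝ → ℝ)
    (hg : HasDerivAt g d t)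
    (heq : g =ᶠ[nhds t] fun τ =>
      α * τ * (C₁ * Real.exp (α * (c + C * g τ)) - 1) /
        (C₁ * Real.exp (α * (c + C * g τ)) + 1)) :
    d * (C₁ * Real.exp (α * (c + C * g t)) + 1) ^ 2
      = α * (C₁ * Real.exp (α * (c + C * g t)) - 1) * (C₁ * Real.exp (α * (c + C * g t)) + 1)
        + 2 * α ^ 2 * t * (C₁ * Real.exp (α * (c + C * g t))) * (C * d) := by
  have hv := auxV' α C₁ C c d t g hg
  have hlin : HasDerivAt (fun τ : ℝ => α * τ) α t := by
    simpa using (hasDerivAt_id t).const_mul α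
  have hnum := hlin.mul (hv.sub_const 1)
  have hden0 : C₁ * Real.exp (α * (c + C * g t)) + 1 ≠ 0 := by positivity
  have hdiv := hnum.div (hv.add_const 1) hden0
  have h2 := hg.unique (hdiv.congr_of_eventuallyEq heq)
  rw [eq_div_iff (by positivity)] at h2
  simp only [Pi.mul_apply] at h2
  linear_combination h2

private lemma stepC' (α C₁ C t d x : ℝ) (g : ℝ → ℝ)
    (hg : HasDerivAt g d x)
    (hne : (C₁ * Real.exp (α * (x + C * g x)) + 1) ^ 2
        - C * (2 * α ^ 2 * t * (C₁ * Real.exp (α * (x + C * g x)))) ≠ 0) :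
    HasDerivAt (fun s => (2 * α ^ 2 * t * (C₁ * Real.exp (α * (s + C * g s))))
        / ((C₁ * Real.exp (α * (s + C * g s)) + 1) ^ 2
          - C * (2 * α ^ 2 * t * (C₁ * Real.exp (α * (s + C * g s))))))
      (-(α * (1 + C * d)) * (2 * α ^ 2 * t * (C₁ * Real.exp (α * (x + C * g x))))
          * (C₁ * Real.exp (α * (x + C * g x)) + 1) * (C₁ * Real.exp (α * (x + C * g x)) - 1)
        / ((C₁ * Real.exp (α * (x + C * g x)) + 1) ^ 2
          - C * (2 * α ^ 2 * t * (C₁ * Real.exp (α * (x + C * g x))))) ^ 2) x := by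
  have hu := auxU' α C₁ C d x g hg
  have hD := hu.const_mul (2 * α ^ 2 * t)
  have hN := ((hu.add_const 1).pow 2).sub (hD.const_mul C)
  have hdiv := hD.div hN hne
  refine hdiv.congr_deriv ?_
  simp only [Pi.sub_apply, Pi.pow_apply, Nat.cast_ofNat]
  field_simp
  ring



/-- The implicitly defined function `w` with
`(Cw+1)/w = A = (C₁E+1)²/(2α²tC₁E)`, `E = exp(α(x+Cθ))`,
`θ = αt(C₁E−1)/(C₁E+1)`, solves the nonevolutionary equation
`w_t + ∂_x (w_x/(w(Cw+1))) = 0` on `D`, assuming the displayed partial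
derivatives exist and mixed partials commute. -/
theorem implicit_solution_of_nonevolutionary_eq
    (α C₁ C : ℝ) (hα : 0 < α) (hC₁ : 0 < C₁)
    (D : Set (ℝ × ℝ)) (hD : IsOpen D) (hDt : ∀ p ∈ D, 0 < p.2)
    (θ E A w : ℝ × ℝ → ℝ)
    (hE : ∀ p : ℝ × ℝ, E p = Real.exp (α * (p.1 + C * θ p)))
    (hθ : ∀ p ∈ D, θ p = α * p.2 * (C₁ * E p - 1) / (C₁ * E p + 1))
    (hA : ∀ p : ℝ × ℝ, A p = (C₁ * E p + 1) ^ 2 / (2 * α ^ 2 * p.2 * C₁ * E p))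
    (hAC : ∀ p ∈ D, A p - C ≠ 0)
    (hw : ∀ p : ℝ × ℝ, w p = 1 / (A p - C))
    (hw0 : ∀ p ∈ D, w p ≠ 0)
    (hCw : ∀ p ∈ D, C * w p + 1 ≠ 0)
    -- θ has first partial derivatives on D
    (hθx : ∀ p ∈ D, DifferentiableAt ℝ (fun s => θ (s, p.2)) p.1)
    (hθt : ∀ p ∈ D, DifferentiableAt ℝ (fun t => θ (p.1, t)) p.2)
    -- w has the partial derivatives appearing in the equation on D
    (hwx : ∀ p ∈ D, DifferentiableAt ℝ (fun s => w (s, p.2)) p.1)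
    (hwt : ∀ p ∈ D, DifferentiableAt ℝ (fun t => w (p.1, t)) p.2)
    (hwxx : ∀ p ∈ D, DifferentiableAt ℝ (fun s => deriv (fun s' => w (s', p.2)) s) p.1)
    (hflux : ∀ p ∈ D, DifferentiableAt ℝ
      (fun s => deriv (fun s' => w (s', p.2)) s /
        (w (s, p.2) * (C * w (s, p.2) + 1))) p.1)
    -- mixed partial derivatives of θ and w commute on D
    (hθmix : ∀ p ∈ D,
      deriv (fun t => deriv (fun s => θ (s, t)) p.1) p.2 =
      deriv (fun s => deriv (fun t => θ (s, t)) p.2) p.1)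
    (hwmix : ∀ p ∈ D,
      deriv (fun t => deriv (fun s => w (s, t)) p.1) p.2 =
      deriv (fun s => deriv (fun t => w (s, t)) p.2) p.1) :
    ∀ x t : ℝ, (x, t) ∈ D →
      deriv (fun t' => w (x, t')) t +
        deriv (fun s => deriv (fun s' => w (s', t)) s /
          (w (s, t) * (C * w (s, t) + 1))) x = 0 := by
  have hE' : ∀ s t : ℝ, E (s, t) = Real.exp (α * (s + C * θ (s, t))) := fun s t => hE (s, t)
  have hθ' : ∀ s t : ℝ, (s, t) ∈ D →
      θ (s, t) = α * t * (C₁ * E (s, t) - 1) / (C₁ * E (s, t) + 1) := fun s t h => hθ (s, t) h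
  have hA' : ∀ s t : ℝ, A (s, t) = (C₁ * E (s, t) + 1) ^ 2 / (2 * α ^ 2 * t * C₁ * E (s, t)) :=
    fun s t => hA (s, t)
  have hw' : ∀ s t : ℝ, w (s, t) = 1 / (A (s, t) - C) := fun s t => hw (s, t)
  have hEpos : ∀ s t : ℝ, 0 < E (s, t) := fun s t => by rw [hE']; exact Real.exp_pos _
  have hACM : ∀ s t : ℝ, (s, t) ∈ D →
      A (s, t) - C = ((C₁ * E (s, t) + 1) ^ 2 - C * (2 * α ^ 2 * t * (C₁ * E (s, t))))
        / (2 * α ^ 2 * t * (C₁ * E (s, t))) := by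
    intro s t h
    have ht : 0 < t := hDt (s, t) h
    have hE0 := hEpos s t
    rw [hA']
    field_simp
  have hM0 : ∀ s t : ℝ, (s, t) ∈ D →
      (C₁ * E (s, t) + 1) ^ 2 - C * (2 * α ^ 2 * t * (C₁ * E (s, t))) ≠ 0 := by
    intro s t h hcontra
    apply hAC (s, t) h
    rw [hACM s t h, hcontra, zero_div]
  have hwM : ∀ s t : ℝ, (s, t) ∈ D →
      w (s, t) * ((C₁ * E (s, t) + 1) ^ 2 - C * (2 * α ^ 2 * t * (C₁ * E (s, t))))
        = 2 * α ^ 2 * t * (C₁ * E (s, t)) := by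
    intro s t h
    rw [hw', hACM s t h, one_div_div, div_mul_cancel₀ _ (hM0 s t h)]
  have hmemx : ∀ s t : ℝ, (s, t) ∈ D → ∀ᶠ s' in nhds s, (s', t) ∈ D := by
    intro s t h
    have hc : Continuous fun s' : ℝ => (s', t) := by fun_prop
    exact (hD.preimage hc).eventually_mem h
  have hmemt : ∀ s t : ℝ, (s, t) ∈ D → ∀ᶠ t' in nhds t, (s, t') ∈ D := by
    intro s t h
    have hc : Continuous fun t' : ℝ => (s, t') := by fun_prop
    exact (hD.preimage hc).eventually_mem h
  -- KEY 1 : ∂θ/∂x = w on D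
  have key1 : ∀ s t : ℝ, (s, t) ∈ D → deriv (fun s' => θ (s', t)) s = w (s, t) := by
    intro x t hp
    have hgx : HasDerivAt (fun s => θ (s, t)) (deriv (fun s => θ (s, t)) x) x :=
      (hθx (x, t) hp).hasDerivAt
    have heq : (fun s => θ (s, t)) =ᶠ[nhds x] fun s =>
        α * t * (C₁ * Real.exp (α * (s + C * θ (s, t))) - 1) /
          (C₁ * Real.exp (α * (s + C * θ (s, t))) + 1) := by
      filter_upwards [hmemx x t hp] with s hs
      rw [← hE' s t]
      exact hθ' s t hs
    have hSA : deriv (fun s => θ (s, t)) x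
          * (C₁ * Real.exp (α * (x + C * θ (x, t))) + 1) ^ 2
        = 2 * α ^ 2 * t * (C₁ * Real.exp (α * (x + C * θ (x, t))))
          * (1 + C * deriv (fun s => θ (s, t)) x) :=
      stepA' α C₁ C t (deriv (fun s => θ (s, t)) x) x hC₁ (fun s => θ (s, t)) hgx heq
    rw [← hE' x t] at hSA
    have h4 : deriv (fun s => θ (s, t)) x
          * ((C₁ * E (x, t) + 1) ^ 2 - C * (2 * α ^ 2 * t * (C₁ * E (x, t))))
        = 2 * α ^ 2 * t * (C₁ * E (x, t)) := by linear_combination hSA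
    exact mul_right_cancel₀ (hM0 x t hp) (h4.trans (hwM x t hp).symm)
  -- KEY 2 : relation for ∂θ/∂t on D
  have key2 : ∀ s t : ℝ, (s, t) ∈ D →
      deriv (fun τ => θ (s, τ)) t * (C₁ * E (s, t) + 1) ^ 2
        = α * (C₁ * E (s, t) - 1) * (C₁ * E (s, t) + 1)
          + 2 * α ^ 2 * t * (C₁ * E (s, t)) * (C * deriv (fun τ => θ (s, τ)) t) := by
    intro x t hp
    have hgt : HasDerivAt (fun τ => θ (x, τ)) (deriv (fun τ => θ (x, τ)) t) t :=
      (hθt (x, t) hp).hasDerivAt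
    have heq : (fun τ => θ (x, τ)) =ᶠ[nhds t] fun τ =>
        α * τ * (C₁ * Real.exp (α * (x + C * θ (x, τ))) - 1) /
          (C₁ * Real.exp (α * (x + C * θ (x, τ))) + 1) := by
      filter_upwards [hmemt x t hp] with τ hτ
      rw [← hE' x τ]
      exact hθ' x τ hτ
    have hSB : deriv (fun τ => θ (x, τ)) t
          * (C₁ * Real.exp (α * (x + C * θ (x, t))) + 1) ^ 2
        = α * (C₁ * Real.exp (α * (x + C * θ (x, t))) - 1)
            * (C₁ * Real.exp (α * (x + C * θ (x, t))) + 1)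
          + 2 * α ^ 2 * t * (C₁ * Real.exp (α * (x + C * θ (x, t))))
            * (C * deriv (fun τ => θ (x, τ)) t) :=
      stepB' α C₁ C x (deriv (fun τ => θ (x, τ)) t) t hC₁ (fun τ => θ (x, τ)) hgt heq
    rw [← hE' x t] at hSB
    exact hSB
  -- KEY 3 : the flux equals -∂θ/∂t on D
  have key3 : ∀ s t : ℝ, (s, t) ∈ D →
      deriv (fun s' => w (s', t)) s / (w (s, t) * (C * w (s, t) + 1))
        = - deriv (fun τ => θ (s, τ)) t := by
    intro x t hp
    have ht : 0 < t := hDt (x, t) hp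
    have hgx : HasDerivAt (fun s => θ (s, t)) (w (x, t)) x := by
      have h := (hθx (x, t) hp).hasDerivAt
      rwa [key1 x t hp] at h
    have hne : (C₁ * Real.exp (α * (x + C * θ (x, t))) + 1) ^ 2
        - C * (2 * α ^ 2 * t * (C₁ * Real.exp (α * (x + C * θ (x, t))))) ≠ 0 := by
      have h := hM0 x t hp
      rwa [hE' x t] at h
    have hSC : HasDerivAt (fun s =>
          (2 * α ^ 2 * t * (C₁ * Real.exp (α * (s + C * θ (s, t)))))
            / ((C₁ * Real.exp (α * (s + C * θ (s, t))) + 1) ^ 2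
              - C * (2 * α ^ 2 * t * (C₁ * Real.exp (α * (s + C * θ (s, t)))))))
        (-(α * (1 + C * w (x, t)))
            * (2 * α ^ 2 * t * (C₁ * Real.exp (α * (x + C * θ (x, t)))))
            * (C₁ * Real.exp (α * (x + C * θ (x, t))) + 1)
            * (C₁ * Real.exp (α * (x + C * θ (x, t))) - 1)
          / ((C₁ * Real.exp (α * (x + C * θ (x, t))) + 1) ^ 2
            - C * (2 * α ^ 2 * t * (C₁ * Real.exp (α * (x + C * θ (x, t)))))) ^ 2) x :=
      stepC' α C₁ C t (w (x, t)) x (fun s => θ (s, t)) hgx hne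
    have hfunext : (fun s' => w (s', t)) = fun s =>
        (2 * α ^ 2 * t * (C₁ * Real.exp (α * (s + C * θ (s, t)))))
          / ((C₁ * Real.exp (α * (s + C * θ (s, t))) + 1) ^ 2
            - C * (2 * α ^ 2 * t * (C₁ * Real.exp (α * (s + C * θ (s, t)))))) := by
      funext s
      rw [hw' s t, ← hE' s t]
      have hE0 := hEpos s t
      rw [show A (s, t) - C = ((C₁ * E (s, t) + 1) ^ 2
          - C * (2 * α ^ 2 * t * (C₁ * E (s, t)))) / (2 * α ^ 2 * t * (C₁ * E (s, t))) from by
        rw [hA']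
        field_simp]
      rw [one_div_div]
    rw [hfunext, hSC.deriv, ← hE' x t]
    rw [div_div, div_eq_iff (mul_ne_zero (pow_ne_zero 2 (hM0 x t hp))
      (mul_ne_zero (hw0 (x, t) hp) (hCw (x, t) hp)))]
    linear_combination
      (C * w (x, t) + 1) * deriv (fun τ => θ (x, τ)) t
          * ((C₁ * E (x, t) + 1) ^ 2 - C * (2 * α ^ 2 * t * (C₁ * E (x, t)))) * (hwM x t hp)
        + (C * w (x, t) + 1) * (2 * α ^ 2 * t * (C₁ * E (x, t))) * (key2 x t hp)
  -- Final assembly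
  intro x t hp
  have e1 : deriv (fun t' => w (x, t')) t
      = deriv (fun t' => deriv (fun s => θ (s, t')) x) t := by
    apply Filter.EventuallyEq.deriv_eq
    filter_upwards [hmemt x t hp] with τ hτ
    exact (key1 x τ hτ).symm
  have e2 : deriv (fun s => deriv (fun s' => w (s', t)) s /
        (w (s, t) * (C * w (s, t) + 1))) x
      = deriv (fun s => - deriv (fun τ => θ (s, τ)) t) x := by
    apply Filter.EventuallyEq.deriv_eq
    filter_upwards [hmemx x t hp] with s hs
    exact key3 s t hs
  have e3 : deriv (fun s => - deriv (fun τ => θ (s, τ)) t) x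
      = - deriv (fun s => deriv (fun τ => θ (s, τ)) t) x := deriv.neg
  have e4 : deriv (fun t' => deriv (fun s => θ (s, t')) x) t
      = deriv (fun s => deriv (fun τ => θ (s, τ)) t) x := hθmix (x, t) hp
  rw [e1, e2, e3, e4]
  ring
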